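/- arXiv:1704.00807 — 4 statements merged into one kernel-verified Lean document; each statement's English description precedes it below -/
import Mathlib

section
/- RSD satisfies the identity of indiscernibles: RSD(S₁, S₂) = 0 if and only if S₁ = S₂. -/
open scoped Classical

variable {α : Type*}

def EditStep (x y : List α) : Prop :=
  (∃ (a : α) (l r : List α), x = l ++ r ∧ y = l ++ a :: r) ∨
  (∃ (a : α) (l r : List α), x = l ++ a :: r ∧ y = l ++ r)

def EditChain : ℕ → List α → List α → Prop
  | 0, x, y => x = y
  | n+1, x, y => ∃ z, EditStep x z ∧ EditChain n z y

/-- Edit distance: minimum number of single-symbol insertions and deletions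
transforming `x` into `y`. -/
noncomputable def ED (x y : List α) : ℕ := sInf {n | EditChain n x y}

/-- Length of a longest common subsequence. -/
noncomputable def LCS (x y : List α) : ℕ :=
  sSup {n | ∃ z : List α, z.length = n ∧ z.Sublist x ∧ z.Sublist y}

/-- The length-`k` suffix of `S`, padded on the left with `none` (the symbol `⊥ ∉ Σ`)
if `k > |S|`. -/
def padSuffix (S : List α) (k : ℕ) : List (Option α) :=
  List.replicate (k - S.length) none ++ (S.map some).drop (S.length - k)

/-- Relative suffix distance. -/
noncomputable def RSD (S S' : List α) : ℝ :=
  ⨆ k : ℕ+, (ED (padSuffix S k) (padSuffix S' k) : ℝ) / (2 * ((k : ℕ) : ℝ))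

/-- The factor `S[i, j)` of `S` (1-based indices). -/
def factor (S : List α) (i j : ℕ) : List α := (S.drop (i - 1)).take (j - i)

/-- `S` is an ε-synchronization string. -/
def IsSyncString (ε : ℝ) (S : List α) : Prop :=
  ∀ i j k : ℕ, 1 ≤ i → i < j → j < k → k ≤ S.length + 1 →
    (1 - ε) * ((k : ℝ) - (i : ℝ)) < (ED (factor S i j) (factor S j k) : ℝ)

/-- Monotone matching between `S` and `S'` (1-based indices). -/
def IsMatching (S S' : List α) (M : List (ℕ × ℕ)) : Prop :=
  M.Chain' (fun p q => p.1 < q.1 ∧ p.2 < q.2) ∧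
  ∀ p ∈ M, 1 ≤ p.1 ∧ p.1 ≤ S.length ∧ 1 ≤ p.2 ∧ p.2 ≤ S'.length ∧
    S[p.1 - 1]? = S'[p.2 - 1]?

/-- `T` satisfies the ε-self-matching property. -/
def HasSelfMatchingProp (ε : ℝ) (T : List α) : Prop :=
  ∀ M : List (ℕ × ℕ), IsMatching T T M →
    ((M.filter (fun p => p.1 ≠ p.2)).length : ℝ) < ε * (T.length : ℝ)

/-- Index `k` of `S` is ε-bad (1-based). -/
def BadIndex (ε : ℝ) (S : List α) (k : ℕ) : Prop :=
  ∃ i j, 1 ≤ i ∧ i ≤ k ∧ k ≤ j ∧ j ≤ S.length ∧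
    ¬ HasSelfMatchingProp ε (factor S i (j + 1))

/-- Number of ε-bad indices of `S`. -/
noncomputable def badCount (ε : ℝ) (S : List α) : ℕ :=
  ((Finset.Icc 1 S.length).filter fun k => BadIndex ε S k).card

lemma editStep_cons (a : α) {x y : List α} (h : EditStep x y) :
    EditStep (a :: x) (a :: y) := by
  rcases h with ⟨b, l, r, hx, hy⟩ | ⟨b, l, r, hx, hy⟩
  · exact Or.inl ⟨b, a :: l, r, by simp [hx], by simp [hy]⟩
  · exact Or.inr ⟨b, a :: l, r, by simp [hx], by simp [hy]⟩

lemma editChain_cons (a : α) :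
    ∀ n {x y : List α}, EditChain n x y → EditChain n (a :: x) (a :: y)
  | 0, _, _, h => by
      simp only [EditChain] at h ⊢; exact congrArg _ h
  | n+1, _, _, ⟨z, hs, hc⟩ => ⟨a :: z, editStep_cons a hs, editChain_cons a n hc⟩

lemma editChain_nil (y : List α) : EditChain y.length ([] : List α) y := by
  induction y with
  | nil => rfl
  | cons a t ih =>
    exact ⟨[a], Or.inl ⟨a, [], [], rfl, rfl⟩, editChain_cons a _ ih⟩

lemma editChain_total (x y : List α) : EditChain (x.length + y.length) x y := by
  induction x with
  | nil => simpa using editChain_nil y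
  | cons a t ih =>
    have h : (a :: t).length + y.length = (t.length + y.length) + 1 := by
      simp [List.length_cons]; omega
    rw [h]
    exact ⟨t, Or.inr ⟨a, [], t, rfl, rfl⟩, ih⟩

lemma ED_le (x y : List α) : ED x y ≤ x.length + y.length :=
  Nat.sInf_le (editChain_total x y)

lemma ED_self (x : List α) : ED x x = 0 :=
  Nat.le_zero.mp (Nat.sInf_le (show EditChain 0 x x from rfl))

lemma padSuffix_length (S : List α) (k : ℕ) : (padSuffix S k).length = k := by
  simp [padSuffix]; omega

lemma padSuffix_filterMap (S : List α) (k : ℕ) (h : S.length ≤ k) :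
    (padSuffix S k).filterMap id = S := by
  have h0 : S.length - k = 0 := Nat.sub_eq_zero_of_le h
  simp [padSuffix, h0, List.filterMap_replicate]

lemma rsd_term_nonneg (S S' : List α) (k : ℕ+) :
    0 ≤ (ED (padSuffix S k) (padSuffix S' k) : ℝ) / (2 * ((k : ℕ) : ℝ)) := by
  positivity

lemma rsd_bdd (S S' : List α) :
    BddAbove (Set.range fun k : ℕ+ =>
      (ED (padSuffix S k) (padSuffix S' k) : ℝ) / (2 * ((k : ℕ) : ℝ))) := by
  refine ⟨1, ?_⟩
  rintro x ⟨k, rfl⟩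
  have hk : (0 : ℝ) < 2 * ((k : ℕ) : ℝ) := by
    have := k.pos
    positivity
  rw [div_le_one hk]
  have h := ED_le (padSuffix S k) (padSuffix S' k)
  rw [padSuffix_length, padSuffix_length] at h
  have : (ED (padSuffix S k) (padSuffix S' k) : ℝ) ≤ ((k : ℕ) + (k : ℕ) : ℕ) := by
    exact_mod_cast h
  calc (ED (padSuffix S k) (padSuffix S' k) : ℝ) ≤ ((k : ℕ) + (k : ℕ) : ℕ) := this
    _ = 2 * ((k : ℕ) : ℝ) := by push_cast; ring

theorem rsd_eq_zero_iff (S₁ S₂ : List α) : RSD S₁ S₂ = 0 ↔ S₁ = S₂ := by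
  constructor
  · intro h
    set k : ℕ+ := ⟨S₁.length + S₂.length + 1, by omega⟩ with hk
    have hle := le_ciSup (rsd_bdd S₁ S₂) k
    rw [show (⨆ k : ℕ+, (ED (padSuffix S₁ k) (padSuffix S₂ k) : ℝ) /
        (2 * ((k : ℕ) : ℝ))) = RSD S₁ S₂ from rfl, h] at hle
    have hge := rsd_term_nonneg S₁ S₂ k
    have hterm : (ED (padSuffix S₁ k) (padSuffix S₂ k) : ℝ) /
        (2 * ((k : ℕ) : ℝ)) = 0 := le_antisymm hle hge
    have hkpos : (2 : ℝ) * ((k : ℕ) : ℝ) ≠ 0 := by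
      have := k.pos; positivity
    have hED : ED (padSuffix S₁ k) (padSuffix S₂ k) = 0 := by
      have := (div_eq_zero_iff.mp hterm).resolve_right hkpos
      exact_mod_cast this
    have hne : {n | EditChain n (padSuffix S₁ (k : ℕ)) (padSuffix S₂ (k : ℕ))}.Nonempty :=
      ⟨_, editChain_total _ _⟩
    have h0 : EditChain 0 (padSuffix S₁ (k : ℕ)) (padSuffix S₂ (k : ℕ)) := by
      rcases (Nat.sInf_eq_zero.mp hED) with h0 | hempty
      · exact h0
      · exact absurd hempty (Set.nonempty_iff_ne_empty.mp hne)
    have heq : padSuffix S₁ (k : ℕ) = padSuffix S₂ (k : ℕ) := h0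
    have h1 : (padSuffix S₁ (k : ℕ)).filterMap id = S₁ :=
      padSuffix_filterMap _ _ (by simp [hk]; omega)
    have h2 : (padSuffix S₂ (k : ℕ)).filterMap id = S₂ :=
      padSuffix_filterMap _ _ (by simp [hk]; omega)
    rw [← h1, ← h2, heq]
  · rintro rfl
    unfold RSD
    have : ∀ k : ℕ+, (ED (padSuffix S₁ k) (padSuffix S₁ k) : ℝ) /
        (2 * ((k : ℕ) : ℝ)) = 0 := by
      intro k
      rw [ED_self]
      simp
    simp only [this]
    exact ciSup_const
end

section
/- There is no ε-synchronization string of length at least ⌈1/ε⌉ + 1 over an alphabet of size smaller than ⌈1/ε⌉. -/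
open scoped Classical

variable {α : Type*}

lemma editChain_append_right (r l : List α) : EditChain r.length (l ++ r) l := by
  induction r with
  | nil => simp [EditChain]
  | cons a r ih => exact ⟨l ++ r, Or.inr ⟨a, l, r, rfl, rfl⟩, ih⟩

lemma ED_le_of_chain {x y : List α} {n : ℕ} (h : EditChain n x y) : ED x y ≤ n :=
  Nat.sInf_le h

theorem no_sync_over_small_alphabet {α : Type*} [Fintype α] (ε : ℝ)
    (hε0 : 0 < ε) (hε1 : ε < 1) (hcard : Fintype.card α < ⌈1 / ε⌉₊)
    (S : List α) (hlen : ⌈1 / ε⌉₊ + 1 ≤ S.length) :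
    ¬ IsSyncString ε S := by
  intro hS
  set m := ⌈1 / ε⌉₊ with hm
  have hm1 : 1 ≤ m := Nat.one_le_ceil_iff.mpr (by positivity)
  have hmlt : (m : ℝ) < 1 / ε + 1 := Nat.ceil_lt_add_one (by positivity)
  have hcard' : Fintype.card α < Fintype.card (Fin m) := by simpa using hcard
  obtain ⟨t₁, t₂, hne, heq⟩ := Fintype.exists_ne_map_eq_of_card_lt
    (fun t : Fin m => S.get ⟨(t : ℕ), by have := t.2; omega⟩) hcard'
  -- wlog t₁ < t₂
  wlog hlt : (t₁ : ℕ) < (t₂ : ℕ) generalizing t₁ t₂ with H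
  · exact H t₂ t₁ hne.symm heq.symm (by omega)
  set u : ℕ := (t₁ : ℕ) with hu
  set v : ℕ := (t₂ : ℕ) with hv
  have hvm : v < m := t₂.2
  have hvlen : v < S.length := by omega
  have hulen : u < S.length := by omega
  have hu1len : u + 1 ≤ S.length := by omega
  -- compute the factors
  have hdropu : S.drop u = S[u] :: S.drop (u + 1) := List.drop_eq_getElem_cons hulen
  have hdropv : S.drop v = S[v] :: S.drop (v + 1) := List.drop_eq_getElem_cons hvlen
  have hx : factor S (u + 1) (v + 1) = S[u] :: (S.drop (u + 1)).take (v - u - 1) := by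
    have h1 : (u + 1) - 1 = u := by omega
    have h2 : (v + 1) - (u + 1) = v - u := by omega
    rw [factor, h1, h2, hdropu]
    have h3 : v - u = (v - u - 1) + 1 := by omega
    rw [h3, List.take_succ_cons]
    simp
  have hy : factor S (v + 1) (v + 2) = [S[v]] := by
    have h1 : (v + 1) - 1 = v := by omega
    have h2 : (v + 2) - (v + 1) = 1 := by omega
    rw [factor, h1, h2, hdropv, List.take_succ_cons, List.take_zero]
  have haeq : S[u] = S[v] := by simpa using heq
  -- edit chain
  have hchain : EditChain ((S.drop (u + 1)).take (v - u - 1)).length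
      ([S[u]] ++ (S.drop (u + 1)).take (v - u - 1)) [S[u]] :=
    editChain_append_right _ _
  have hlenrest : ((S.drop (u + 1)).take (v - u - 1)).length = v - u - 1 := by
    simp [List.length_take, List.length_drop]; omega
  have hED : ED (factor S (u + 1) (v + 1)) (factor S (v + 1) (v + 2)) ≤ v - u - 1 := by
    rw [hx, hy, ← haeq]
    calc ED (S[u] :: (S.drop (u + 1)).take (v - u - 1)) [S[u]]
        ≤ ((S.drop (u + 1)).take (v - u - 1)).length := ED_le_of_chain hchain
      _ = v - u - 1 := hlenrest
  have hsync := hS (u + 1) (v + 1) (v + 2) (by omega) (by omega) (by omega) (by omega)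
  have hEDr : (ED (factor S (u + 1) (v + 1)) (factor S (v + 1) (v + 2)) : ℝ)
      ≤ ((v : ℝ) - u - 1) := by
    have h := (Nat.cast_le (α := ℝ)).mpr hED
    have hcast : ((v - u - 1 : ℕ) : ℝ) = (v : ℝ) - u - 1 := by
      have h' : v - u - 1 = v - (u + 1) := by omega
      rw [h', Nat.cast_sub (by omega)]; push_cast; ring
    linarith [hcast ▸ h]
  have hcast2 : ((v + 2 : ℕ) : ℝ) - ((u + 1 : ℕ) : ℝ) = (v : ℝ) - u + 1 := by
    push_cast; ring
  rw [hcast2] at hsync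
  have hvu : (1 : ℝ) ≤ (v : ℝ) - u := by
    have : u + 1 ≤ v := hlt
    have := (Nat.cast_le (α := ℝ)).mpr this
    push_cast at this; linarith
  have hvm' : (v : ℝ) + 1 ≤ m := by exact_mod_cast hvm
  have hu0 : (0 : ℝ) ≤ (u : ℝ) := Nat.cast_nonneg u
  have key : 2 < ε * ((v : ℝ) - u + 1) := by nlinarith [hsync, hEDr]
  have h2 : ε * ((v : ℝ) - u + 1) ≤ ε * m :=
    mul_le_mul_of_nonneg_left (by linarith) hε0.le
  have h3 : ε * m < 2 := by
    have h4 := (mul_lt_mul_iff_right₀ hε0).mpr hmlt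
    rw [mul_add, mul_one_div_cancel hε0.ne'] at h4
    linarith
  linarith
end

section
/- Let S be a string of length n satisfying the ε-self-matching property. Then for any ε' with 3ε < ε' < 1, the number of ε'-bad indices of S is at most 3nε/ε'. -/
open scoped Classical

variable {α : Type*}

lemma factor_length (S : List α) (i j : ℕ) (hi : 1 ≤ i) (hij : i ≤ j) (hj : j ≤ S.length) :
    (factor S i (j+1)).length = j + 1 - i := by
  simp only [factor, List.length_take, List.length_drop]
  omega

lemma factor_get? (S : List α) (i j k : ℕ) (hk : k < j + 1 - i) :
    (factor S i (j+1))[k]? = S[i - 1 + k]? := by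
  unfold factor
  rw [List.getElem?_take_of_lt hk, List.getElem?_drop]

lemma exists_bad_matching {ε : ℝ} {T : List α} (h : ¬ HasSelfMatchingProp ε T) :
    ∃ M, IsMatching T T M ∧ ε * (T.length : ℝ) ≤ ((M.filter fun p => p.1 ≠ p.2).length : ℝ) := by
  unfold HasSelfMatchingProp at h
  push_neg at h
  obtain ⟨M, hM, hle⟩ := h
  exact ⟨M, hM, hle⟩

lemma shift_matching (S : List α) (i j : ℕ) (hi : 1 ≤ i) (hij : i ≤ j) (hj : j ≤ S.length)
    (M : List (ℕ × ℕ)) (hM : IsMatching (factor S i (j+1)) (factor S i (j+1)) M) :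
    IsMatching S S (M.map fun m => (m.1 + (i-1), m.2 + (i-1))) ∧
    (∀ m ∈ (M.map fun m => (m.1 + (i-1), m.2 + (i-1))), i ≤ m.1 ∧ m.1 ≤ j ∧ i ≤ m.2 ∧ m.2 ≤ j) ∧
    ((M.map fun m => (m.1 + (i-1), m.2 + (i-1))).filter fun m => m.1 ≠ m.2).length
      = (M.filter fun m => m.1 ≠ m.2).length := by
  have hlen := factor_length S i j hi hij hj
  have hbounds : ∀ m ∈ M, 1 ≤ m.1 ∧ m.1 ≤ j + 1 - i ∧ 1 ≤ m.2 ∧ m.2 ≤ j + 1 - i ∧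
      (factor S i (j+1))[m.1 - 1]? = (factor S i (j+1))[m.2 - 1]? := by
    intro m hm
    have := hM.2 m hm
    rw [hlen] at this
    exact this
  refine ⟨⟨?_, ?_⟩, ?_, ?_⟩
  · show List.IsChain _ _
    rw [List.isChain_map]
    exact (hM.1 : List.IsChain _ M).imp (fun a b hab => ⟨by omega, by omega⟩)
  · intro m hm
    obtain ⟨m0, hm0, rfl⟩ := List.mem_map.1 hm
    obtain ⟨h1, h2, h3, h4, h5⟩ := hbounds m0 hm0
    rw [factor_get? S i j _ (by omega), factor_get? S i j _ (by omega)] at h5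
    refine ⟨by omega, by omega, by omega, by omega, ?_⟩
    have e1 : m0.1 + (i-1) - 1 = i - 1 + (m0.1 - 1) := by omega
    have e2 : m0.2 + (i-1) - 1 = i - 1 + (m0.2 - 1) := by omega
    rw [e1, e2]
    exact h5
  · intro m hm
    obtain ⟨m0, hm0, rfl⟩ := List.mem_map.1 hm
    obtain ⟨h1, h2, h3, h4, _⟩ := hbounds m0 hm0
    exact ⟨by omega, by omega, by omega, by omega⟩
  · rw [List.filter_map, List.length_map]
    congr 1
    apply List.filter_congr
    intro m _
    simp only [Function.comp]
    exact decide_eq_decide.2 (by constructor <;> intro <;> omega)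

lemma combine_matching (ε' : ℝ) (S : List α) :
    ∀ L : List (ℕ × ℕ),
    (∀ p ∈ L, 1 ≤ p.1 ∧ p.1 ≤ p.2 ∧ p.2 ≤ S.length ∧
      ¬ HasSelfMatchingProp ε' (factor S p.1 (p.2+1))) →
    L.Pairwise (fun p q => p.2 < q.1) →
    ∃ M : List (ℕ × ℕ), IsMatching S S M ∧
      (∀ m ∈ M, ∃ p ∈ L, p.1 ≤ m.1 ∧ m.1 ≤ p.2 ∧ p.1 ≤ m.2 ∧ m.2 ≤ p.2) ∧
      ε' * (((L.map (fun p => p.2 + 1 - p.1)).sum : ℕ) : ℝ)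
        ≤ ((M.filter fun m => m.1 ≠ m.2).length : ℝ) := by
  intro L
  induction L with
  | nil =>
    intro _ _
    refine ⟨[], ⟨List.isChain_nil, by simp⟩, by simp, by simp⟩
  | cons p L ih =>
    intro hL hpw
    obtain ⟨hp1, hp12, hp2n, hviol⟩ := hL p List.mem_cons_self
    obtain ⟨hpwhead, hpwtail⟩ := List.pairwise_cons.1 hpw
    obtain ⟨M', hM'match, hM'loc, hM'cnt⟩ :=
      ih (fun q hq => hL q (List.mem_cons_of_mem _ hq)) hpwtail
    obtain ⟨M0, hM0, hM0cnt⟩ := exists_bad_matching hviol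
    obtain ⟨hMsmatch, hMsbounds, hMscnt⟩ := shift_matching S p.1 p.2 hp1 hp12 hp2n M0 hM0
    set Ms := M0.map (fun m => (m.1 + (p.1-1), m.2 + (p.1-1))) with hMsdef
    have hM'big : ∀ m ∈ M', p.2 < m.1 ∧ p.2 < m.2 := by
      intro m hm
      obtain ⟨r, hrL, hr1, hr2, hr3, hr4⟩ := hM'loc m hm
      have := hpwhead r hrL
      omega
    refine ⟨Ms ++ M', ⟨?_, ?_⟩, ?_, ?_⟩
    · show List.IsChain _ _
      rw [List.isChain_append]
      refine ⟨hMsmatch.1, hM'match.1, ?_⟩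
      intro x hx y hy
      have hxmem := List.mem_of_mem_getLast? hx
      have hymem := List.mem_of_mem_head? hy
      have h1 := hMsbounds x hxmem
      have h2 := hM'big y hymem
      exact ⟨by omega, by omega⟩
    · intro m hm
      rcases List.mem_append.1 hm with hm | hm
      · exact hMsmatch.2 m hm
      · exact hM'match.2 m hm
    · intro m hm
      rcases List.mem_append.1 hm with hm | hm
      · exact ⟨p, List.mem_cons_self, hMsbounds m hm⟩
      · obtain ⟨r, hrL, hr⟩ := hM'loc m hm
        exact ⟨r, List.mem_cons_of_mem _ hrL, hr⟩
    · rw [List.filter_append, List.length_append]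
      rw [factor_length S p.1 p.2 hp1 hp12 hp2n] at hM0cnt
      rw [hMscnt]
      simp only [List.map_cons, List.sum_cons, Nat.cast_add]
      have e : ((p.2 + 1 - p.1 : ℕ) : ℝ) = ((p.2 : ℝ) + 1 - (p.1 : ℝ)) := by
        rw [Nat.cast_sub (by omega : p.1 ≤ p.2 + 1)]
        push_cast
        ring
      rw [e] at hM0cnt ⊢
      nlinarith [hM0cnt, hM'cnt]

lemma cover_lemma : ∀ (N : ℕ) (F : Finset (ℕ × ℕ)), F.card ≤ N →
    (∀ p ∈ F, p.1 ≤ p.2) → ∀ (B : Finset ℕ),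
    (∀ k ∈ B, ∃ p ∈ F, p.1 ≤ k ∧ k ≤ p.2) →
    ∃ L : List (ℕ × ℕ), (∀ p ∈ L, p ∈ F) ∧
      L.Pairwise (fun p q => p.2 < q.1 ∨ q.2 < p.1) ∧
      B.card ≤ 3 * (L.map (fun p => p.2 + 1 - p.1)).sum := by
  intro N
  induction N with
  | zero =>
    intro F hFcard _ B hcov
    have hF : F = ∅ := Finset.card_eq_zero.1 (Nat.le_zero.1 hFcard)
    subst hF
    refine ⟨[], by simp, by simp, ?_⟩
    have : B = ∅ := Finset.eq_empty_of_forall_notMem (fun k hk => by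
      obtain ⟨p, hp, _⟩ := hcov k hk
      exact absurd hp (Finset.notMem_empty p))
    simp [this]
  | succ N ih =>
    intro F hFcard hF B hcov
    rcases Finset.eq_empty_or_nonempty B with rfl | ⟨k0, hk0⟩
    · exact ⟨[], by simp, by simp, by simp⟩
    obtain ⟨p0, hp0F, _⟩ := hcov k0 hk0
    obtain ⟨P, hPF, hPmax⟩ := Finset.exists_max_image F (fun p => p.2 + 1 - p.1) ⟨p0, hp0F⟩
    have hab : P.1 ≤ P.2 := hF P hPF
    set len := P.2 + 1 - P.1 with hlen
    set lo := P.1 - (len - 1) with hlo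
    set hi := P.2 + (len - 1) with hhi
    set F' := F.filter (fun q => q.2 < P.1 ∨ P.2 < q.1) with hF'def
    have hPnot : P ∉ F' := by
      simp only [hF'def, Finset.mem_filter, not_and, not_or]
      intro _
      omega
    have hF'card : F'.card ≤ N := by
      have h1 : F' ⊆ F.erase P := fun q hq =>
        Finset.mem_erase.2 ⟨fun he => hPnot (he ▸ hq), (Finset.mem_filter.1 hq).1⟩
      have := Finset.card_le_card h1
      rw [Finset.card_erase_of_mem hPF] at this
      omega
    set B' := B.filter (fun k => ¬ (lo ≤ k ∧ k ≤ hi)) with hB'def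
    have hcov' : ∀ k ∈ B', ∃ p ∈ F', p.1 ≤ k ∧ k ≤ p.2 := by
      intro k hk
      obtain ⟨hkB, hknot⟩ := Finset.mem_filter.1 hk
      obtain ⟨p, hpF, hp1, hp2⟩ := hcov k hkB
      refine ⟨p, Finset.mem_filter.2 ⟨hpF, ?_⟩, hp1, hp2⟩
      by_contra hcon
      push_neg at hcon
      have hple := hF p hpF
      have hmax := hPmax p hpF
      exact hknot (by omega)
    obtain ⟨L', hL'F, hL'pw, hL'card⟩ :=
      ih F' hF'card (fun p hp => hF p (Finset.mem_filter.1 hp).1) B' hcov'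
    refine ⟨P :: L', ?_, ?_, ?_⟩
    · intro q hq
      rcases List.mem_cons.1 hq with rfl | hq
      · exact hPF
      · exact (Finset.mem_filter.1 (hL'F q hq)).1
    · refine List.pairwise_cons.2 ⟨?_, hL'pw⟩
      intro q hq
      have := (Finset.mem_filter.1 (hL'F q hq)).2
      omega
    · have hsubU : B ⊆ (B.filter (fun k => lo ≤ k ∧ k ≤ hi)) ∪ B' := by
        intro k hk
        by_cases hc : lo ≤ k ∧ k ≤ hi
        · exact Finset.mem_union_left _ (Finset.mem_filter.2 ⟨hk, hc⟩)
        · exact Finset.mem_union_right _ (Finset.mem_filter.2 ⟨hk, hc⟩)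
      have hsplit : B.card ≤ (B.filter (fun k => lo ≤ k ∧ k ≤ hi)).card + B'.card :=
        le_trans (Finset.card_le_card hsubU) (Finset.card_union_le _ _)
      have hsub : B.filter (fun k => lo ≤ k ∧ k ≤ hi) ⊆ Finset.Icc lo hi := fun k hk =>
        Finset.mem_Icc.2 (Finset.mem_filter.1 hk).2
      have h1 : (B.filter (fun k => lo ≤ k ∧ k ≤ hi)).card ≤ hi + 1 - lo := by
        simpa [Nat.card_Icc] using Finset.card_le_card hsub
      simp only [List.map_cons, List.sum_cons]
      have h2 : hi + 1 - lo ≤ 3 * len := by omega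
      omega

lemma exists_min_fst (L : List (ℕ × ℕ)) (h : L ≠ []) : ∃ p ∈ L, ∀ q ∈ L, p.1 ≤ q.1 := by
  induction L with
  | nil => exact absurd rfl h
  | cons p L ih =>
    rcases eq_or_ne L [] with rfl | hL
    · exact ⟨p, by simp⟩
    obtain ⟨m, hmL, hmin⟩ := ih hL
    rcases le_total p.1 m.1 with h' | h'
    · refine ⟨p, List.mem_cons_self, fun q hq => ?_⟩
      rcases List.mem_cons.1 hq with rfl | hq
      · exact le_refl _
      · exact h'.trans (hmin q hq)
    · refine ⟨m, List.mem_cons_of_mem _ hmL, fun q hq => ?_⟩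
      rcases List.mem_cons.1 hq with rfl | hq
      · exact h'
      · exact hmin q hq

lemma sort_disjoint : ∀ (n : ℕ) (L : List (ℕ × ℕ)), L.length ≤ n →
    (∀ p ∈ L, p.1 ≤ p.2) →
    L.Pairwise (fun p q => p.2 < q.1 ∨ q.2 < p.1) →
    ∃ L' : List (ℕ × ℕ), L'.Perm L ∧ L'.Pairwise (fun p q => p.2 < q.1) := by
  intro n
  induction n with
  | zero =>
    intro L hlen _ _
    have : L = [] := List.eq_nil_of_length_eq_zero (Nat.le_zero.1 hlen)
    exact ⟨[], by simp [this], by simp⟩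
  | succ n ih =>
    intro L hlen hle hpw
    rcases eq_or_ne L [] with rfl | hL
    · exact ⟨[], by simp, by simp⟩
    obtain ⟨p, hpL, hpmin⟩ := exists_min_fst L hL
    obtain ⟨l1, l2, rfl⟩ := List.append_of_mem hpL
    have hperm : (l1 ++ p :: l2).Perm (p :: (l1 ++ l2)) := List.perm_middle
    have hsub : (l1 ++ l2).Sublist (l1 ++ p :: l2) :=
      (List.sublist_cons_self p l2).append_left l1
    have hlen' : (l1 ++ l2).length ≤ n := by
      simp only [List.length_append, List.length_cons] at hlen ⊢
      omega
    obtain ⟨L'', hL''perm, hL''pw⟩ := ih (l1 ++ l2) hlen'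
      (fun q hq => hle q (hsub.mem hq)) (hpw.sublist hsub)
    have hsym : ∀ {x y : ℕ × ℕ}, (x.2 < y.1 ∨ y.2 < x.1) → (y.2 < x.1 ∨ x.2 < y.1) := by
      intro x y hxy; omega
    have hpwperm : (p :: (l1 ++ l2)).Pairwise (fun p q => p.2 < q.1 ∨ q.2 < p.1) :=
      (List.Perm.pairwise_iff hsym hperm).1 hpw
    have hrel : ∀ q ∈ l1 ++ l2, p.2 < q.1 := by
      intro q hq
      have hd := (List.pairwise_cons.1 hpwperm).1 q hq
      have h1 := hpmin q (hsub.mem hq)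
      have h2 := hle q (hsub.mem hq)
      omega
    refine ⟨p :: L'', (hL''perm.cons p).trans hperm.symm, ?_⟩
    refine List.pairwise_cons.2 ⟨?_, hL''pw⟩
    intro q hq
    exact hrel q ((hL''perm.mem_iff).1 hq)

theorem bad_index_count_bound (ε ε' : ℝ) (S : List α)
    (h : HasSelfMatchingProp ε S) (h1 : 3 * ε < ε') (h2 : ε' < 1) :
    (badCount ε' S : ℝ) ≤ 3 * (S.length : ℝ) * ε / ε' := by
  have h0 : (0:ℝ) < ε * S.length := by
    have := h [] ⟨List.isChain_nil, by simp⟩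
    simpa using this
  have hε : 0 < ε := by
    by_contra hc
    push_neg at hc
    have : ε * (S.length : ℝ) ≤ 0 := mul_nonpos_of_nonpos_of_nonneg hc (Nat.cast_nonneg _)
    linarith
  have hε' : 0 < ε' := by linarith
  have hBbad : ∀ k, k ∈ (Finset.Icc 1 S.length).filter (fun k => BadIndex ε' S k) →
      ∃ i j, 1 ≤ i ∧ i ≤ k ∧ k ≤ j ∧ j ≤ S.length ∧
        ¬ HasSelfMatchingProp ε' (factor S i (j + 1)) :=
    fun k hk => (Finset.mem_filter.1 hk).2
  choose! f g hf1 hf2 hf3 hf4 hf5 using hBbad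
  have hFle : ∀ p ∈ ((Finset.Icc 1 S.length).filter (fun k => BadIndex ε' S k)).image
      (fun k => (f k, g k)), p.1 ≤ p.2 := by
    intro p hp
    obtain ⟨k, hk, rfl⟩ := Finset.mem_image.1 hp
    have := hf2 k hk
    have := hf3 k hk
    simp only
    omega
  have hcov : ∀ k ∈ (Finset.Icc 1 S.length).filter (fun k => BadIndex ε' S k),
      ∃ p ∈ ((Finset.Icc 1 S.length).filter (fun k => BadIndex ε' S k)).image
        (fun k => (f k, g k)), p.1 ≤ k ∧ k ≤ p.2 := fun k hk =>
    ⟨(f k, g k), Finset.mem_image_of_mem _ hk, hf2 k hk, hf3 k hk⟩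
  obtain ⟨L, hLF, hLpw, hLcard⟩ := cover_lemma _ _ le_rfl hFle _ hcov
  have hLprop : ∀ p ∈ L, 1 ≤ p.1 ∧ p.1 ≤ p.2 ∧ p.2 ≤ S.length ∧
      ¬ HasSelfMatchingProp ε' (factor S p.1 (p.2+1)) := by
    intro p hp
    obtain ⟨k, hk, rfl⟩ := Finset.mem_image.1 (hLF p hp)
    have h2' := hf2 k hk
    have h3' := hf3 k hk
    exact ⟨hf1 k hk, by simp only; omega, hf4 k hk, hf5 k hk⟩
  obtain ⟨L2, hL2perm, hL2pw⟩ := sort_disjoint L.length L le_rfl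
    (fun p hp => (hLprop p hp).2.1) hLpw
  have hL2prop : ∀ p ∈ L2, 1 ≤ p.1 ∧ p.1 ≤ p.2 ∧ p.2 ≤ S.length ∧
      ¬ HasSelfMatchingProp ε' (factor S p.1 (p.2+1)) :=
    fun p hp => hLprop p (hL2perm.mem_iff.1 hp)
  have hsum : (L2.map (fun p => p.2+1-p.1)).sum = (L.map (fun p => p.2+1-p.1)).sum :=
    (hL2perm.map _).sum_eq
  obtain ⟨M, hMmatch, _, hMcnt⟩ := combine_matching ε' S L2 hL2prop hL2pw
  have hMS := h M hMmatch
  have hbc : (badCount ε' S : ℝ) ≤ 3 * (((L2.map (fun p => p.2+1-p.1)).sum : ℕ) : ℝ) := by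
    have hbcn : badCount ε' S ≤ 3 * (L2.map (fun p => p.2+1-p.1)).sum := by
      unfold badCount
      rw [hsum]
      exact hLcard
    exact_mod_cast hbcn
  rw [le_div_iff₀ hε']
  nlinarith [mul_le_mul_of_nonneg_right hbc (le_of_lt hε'), hMcnt, hMS]
end

section
/- Any string of length l > 100m which contains a monotone self-matching with at least εl bad pairs contains two sub-intervals I₁ and I₂ of length m such that there is a monotone matching of size at least 0.99·mε/2 between I₁ and I₂. -/
open scoped Classical

variable {α : Type*}

instance : IsTrans (ℕ × ℕ) (fun p q => p.1 < q.1 ∧ p.2 < q.2) :=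
  ⟨fun _ _ _ h h' => ⟨h.1.trans h'.1, h.2.trans h'.2⟩⟩

theorem dense_submatching_of_self_matching (ε : ℝ) (S : List α) (m : ℕ)
    (hm : 100 * m < S.length) (M : List (ℕ × ℕ)) (hM : IsMatching S S M)
    (hbad : ∀ p ∈ M, p.1 ≠ p.2) (hsize : ε * (S.length : ℝ) ≤ (M.length : ℝ)) :
    ∃ p q : ℕ, ∃ M' : List (ℕ × ℕ),
      1 ≤ p ∧ p + m ≤ S.length + 1 ∧ 1 ≤ q ∧ q + m ≤ S.length + 1 ∧
      IsMatching S S M' ∧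
      (∀ pr ∈ M', p ≤ pr.1 ∧ pr.1 < p + m ∧ q ≤ pr.2 ∧ pr.2 < q + m) ∧
      0.99 * ((m : ℝ) * ε / 2) ≤ (M'.length : ℝ) := by
  classical
  set l := S.length with hl
  have hml : m < l := lt_of_le_of_lt (Nat.le_mul_of_pos_left m (by norm_num)) hm
  by_cases htriv : ε ≤ 0 ∨ m = 0
  · refine ⟨1, 1, [], le_refl 1, by omega, le_refl 1, by omega,
      ⟨List.isChain_nil, by simp⟩, by simp, ?_⟩
    simp only [List.length_nil, Nat.cast_zero]
    rcases htriv with h | h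
    · nlinarith [Nat.cast_nonneg (α := ℝ) m]
    · simp [h]
  push_neg at htriv
  obtain ⟨hε, hm0⟩ := htriv
  have hm0' : 0 < m := Nat.pos_of_ne_zero hm0
  have hl0 : 0 < l := lt_of_le_of_lt (Nat.zero_le m) hml
  -- block index
  set f : ℕ × ℕ → ℕ × ℕ := fun pr => ((pr.1 - 1) / m, (pr.2 - 1) / m) with hf
  set B : ℕ := (l - 1) / m + 1 with hB
  have hB1 : 1 ≤ B := by rw [hB]; exact Nat.le_add_left 1 _
  set N : Multiset (ℕ × ℕ) := ((M.map f : List (ℕ × ℕ)) : Multiset (ℕ × ℕ)) with hN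
  set T : Finset (ℕ × ℕ) := N.toFinset with hT
  have hmemT : ∀ x, x ∈ T → ∃ pr ∈ M, f pr = x := by
    intro x hx
    rw [hT, Multiset.mem_toFinset, hN, Multiset.mem_coe, List.mem_map] at hx
    exact hx
  -- components of elements of T are ≤ B - 1
  have hcomp : ∀ x ∈ T, x.1 ≤ B - 1 ∧ x.2 ≤ B - 1 := by
    intro x hx
    obtain ⟨pr, hpr, rfl⟩ := hmemT x hx
    obtain ⟨_, h1, _, h2, _⟩ := hM.2 pr hpr
    have e : B - 1 = (l - 1) / m := by omega
    rw [e]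
    exact ⟨Nat.div_le_div_right (by omega), Nat.div_le_div_right (by omega)⟩
  -- pairwise monotone blocks
  have hpw : (M.map f).Pairwise (fun a b : ℕ × ℕ => a.1 ≤ b.1 ∧ a.2 ≤ b.2) := by
    refine List.Pairwise.map f ?_ (List.isChain_iff_pairwise.mp hM.1)
    intro a b hab
    exact ⟨Nat.div_le_div_right (by omega), Nat.div_le_div_right (by omega)⟩
  -- injectivity of sum on T
  have hinj : Set.InjOn (fun x : ℕ × ℕ => x.1 + x.2) ↑T := by
    intro x hx y hy hxy
    simp only at hxy
    have hx' : x ∈ M.map f := by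
      obtain ⟨pr, hpr, rfl⟩ := hmemT x hx; exact List.mem_map_of_mem hpr
    have hy' : y ∈ M.map f := by
      obtain ⟨pr, hpr, rfl⟩ := hmemT y hy; exact List.mem_map_of_mem hpr
    by_contra hne
    have hsymm : Symmetric (fun a b : ℕ × ℕ =>
        (a.1 ≤ b.1 ∧ a.2 ≤ b.2) ∨ (b.1 ≤ a.1 ∧ b.2 ≤ a.2)) := fun a b h => h.symm
    haveI : Std.Symm (fun a b : ℕ × ℕ =>
        (a.1 ≤ b.1 ∧ a.2 ≤ b.2) ∨ (b.1 ≤ a.1 ∧ b.2 ≤ a.2)) := ⟨fun a b h => hsymm h⟩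
    have hpw2 : (M.map f).Pairwise (fun a b : ℕ × ℕ =>
        (a.1 ≤ b.1 ∧ a.2 ≤ b.2) ∨ (b.1 ≤ a.1 ∧ b.2 ≤ a.2)) := hpw.imp (fun h => Or.inl h)
    have := hpw2.forall hx' hy' hne
    rcases this with h | h
    · exact hne (Prod.ext (by omega) (by omega))
    · exact hne (Prod.ext (by omega) (by omega))
  -- card bound
  have hcard : T.card ≤ 2 * B - 1 := by
    rw [← Finset.card_image_of_injOn hinj]
    refine le_trans (Finset.card_le_card (t := Finset.range (2 * B - 1)) ?_) (by simp)
    intro s hs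
    rw [Finset.mem_image] at hs
    obtain ⟨x, hx, rfl⟩ := hs
    have := hcomp x hx
    rw [Finset.mem_range]
    omega
  -- sum of counts
  have hsum : ∑ x ∈ T, N.count x = M.length := by
    rw [hT, Multiset.toFinset_sum_count_eq, hN, Multiset.coe_card, List.length_map]
  have hM0 : 0 < M.length := by
    by_contra h
    push_neg at h
    have hMl : M.length = 0 := by omega
    have h0 : ε * (l : ℝ) ≤ 0 := by simpa [hMl] using hsize
    nlinarith [(Nat.cast_pos (α := ℝ)).mpr hl0]
  have hTne : T.Nonempty := by
    rcases List.exists_mem_of_length_pos hM0 with ⟨pr, hpr⟩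
    refine ⟨f pr, ?_⟩
    rw [hT, Multiset.mem_toFinset, hN, Multiset.mem_coe]
    exact List.mem_map_of_mem hpr
  -- pigeonhole
  have hpig : ∃ x ∈ T, M.length ≤ (2 * B - 1) * N.count x := by
    by_contra h
    push_neg at h
    have hlt : ∑ x ∈ T, (2 * B - 1) * N.count x < ∑ _x ∈ T, M.length :=
      Finset.sum_lt_sum_of_nonempty hTne fun x hx => h x hx
    rw [← Finset.mul_sum, hsum, Finset.sum_const, smul_eq_mul] at hlt
    have hmul : T.card * M.length ≤ (2 * B - 1) * M.length :=
      Nat.mul_le_mul_right _ hcard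
    omega
  obtain ⟨⟨s, t⟩, hxT, hcount⟩ := hpig
  set M' : List (ℕ × ℕ) := M.filter (fun pr => f pr = (s, t)) with hM'
  have hM'len : M'.length = N.count (s, t) := by
    show _ = Multiset.countP ((s, t) = ·) N
    rw [hN, Multiset.coe_countP, List.countP_map, List.countP_eq_length_filter, hM']
    congr 1
    apply List.filter_congr
    intro pr _
    simp [Function.comp, eq_comm]
  set p : ℕ := min (1 + s * m) (l + 1 - m) with hp
  set q : ℕ := min (1 + t * m) (l + 1 - m) with hq
  have hsB : s ≤ B - 1 ∧ t ≤ B - 1 := hcomp (s, t) hxT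
  have hmem' : ∀ pr ∈ M', pr ∈ M ∧ f pr = (s, t) := by
    intro pr hpr
    rw [hM', List.mem_filter] at hpr
    exact ⟨hpr.1, by simpa using hpr.2⟩
  refine ⟨p, q, M', ?_, ?_, ?_, ?_, ?_, ?_, ?_⟩
  · simp only [hp, le_min_iff]; omega
  · have : p ≤ l + 1 - m := min_le_right _ _
    omega
  · simp only [hq, le_min_iff]; omega
  · have : q ≤ l + 1 - m := min_le_right _ _
    omega
  · exact ⟨hM.1.sublist List.filter_sublist, fun pr hpr => hM.2 pr (hmem' pr hpr).1⟩
  · intro pr hpr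
    obtain ⟨hprM, hfpr⟩ := hmem' pr hpr
    obtain ⟨h1, h2, h3, h4, _⟩ := hM.2 pr hprM
    have hs1 : (pr.1 - 1) / m = s := by
      have := congrArg Prod.fst hfpr; simpa [hf] using this
    have ht1 : (pr.2 - 1) / m = t := by
      have := congrArg Prod.snd hfpr; simpa [hf] using this
    have hsl1 : s * m ≤ pr.1 - 1 := by
      have h := Nat.div_mul_le_self (pr.1 - 1) m
      rw [hs1] at h; exact h
    have hsl2 : pr.1 - 1 < s * m + m := by
      have h := (Nat.div_lt_iff_lt_mul hm0').mp (by rw [hs1]; omega : (pr.1 - 1) / m < s + 1)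
      have e : (s + 1) * m = s * m + m := by ring
      rw [e] at h; exact h
    have htl1 : t * m ≤ pr.2 - 1 := by
      have h := Nat.div_mul_le_self (pr.2 - 1) m
      rw [ht1] at h; exact h
    have htl2 : pr.2 - 1 < t * m + m := by
      have h := (Nat.div_lt_iff_lt_mul hm0').mp (by rw [ht1]; omega : (pr.2 - 1) / m < t + 1)
      have e : (t + 1) * m = t * m + m := by ring
      rw [e] at h; exact h
    have hp1 : p ≤ 1 + s * m := min_le_left _ _
    have hq1 : q ≤ 1 + t * m := min_le_left _ _
    have hpmin : p + m = min (1 + s * m + m) (l + 1) := by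
      simp only [hp]; omega
    have hqmin : q + m = min (1 + t * m + m) (l + 1) := by
      simp only [hq]; omega
    refine ⟨by omega, ?_, by omega, ?_⟩
    · rw [hpmin]; exact lt_min (by omega) (by omega)
    · rw [hqmin]; exact lt_min (by omega) (by omega)
  · -- size bound
    have hcount' : (M.length : ℝ) ≤ ((2 * B - 1 : ℕ) : ℝ) * (M'.length : ℝ) := by
      rw [hM'len]
      exact_mod_cast hcount
    have hBl : ((2 * B - 1 : ℕ) : ℝ) ≤ 2 * (((l : ℝ) - 1) / m) + 1 := by
      have h1 : ((((l - 1) / m : ℕ)) : ℝ) ≤ ((l - 1 : ℕ) : ℝ) / m := Nat.cast_div_le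
      have h2 : ((l - 1 : ℕ) : ℝ) = (l : ℝ) - 1 := by
        have h4 : (1 : ℕ) ≤ l := hl0
        push_cast [h4]
        ring
      have h3 : (2 * B - 1 : ℕ) = 2 * ((l - 1) / m) + 1 := by omega
      rw [h3]
      push_cast
      rw [h2] at h1
      linarith
    have hmR : (0 : ℝ) < m := by exact_mod_cast hm0'
    have hlR : (100 : ℝ) * m < l := by exact_mod_cast hm
    have hlen' : 0 ≤ (M'.length : ℝ) := Nat.cast_nonneg _
    have key : ε * l ≤ (2 * (((l : ℝ) - 1) / m) + 1) * M'.length := by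
      calc ε * l ≤ (M.length : ℝ) := hsize
        _ ≤ ((2 * B - 1 : ℕ) : ℝ) * M'.length := hcount'
        _ ≤ (2 * (((l : ℝ) - 1) / m) + 1) * M'.length :=
            mul_le_mul_of_nonneg_right hBl hlen'
    have key2 : ε * l * m ≤ (2 * ((l : ℝ) - 1) + m) * M'.length := by
      have h5 := mul_le_mul_of_nonneg_right key (le_of_lt hmR)
      have e : (2 * (((l : ℝ) - 1) / m) + 1) * M'.length * m
          = (2 * ((l : ℝ) - 1) + m) * M'.length := by
        first
        | (field_simp; ring)
        | field_simp
      rw [e] at h5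
      exact h5
    have h495 : 0.495 * (2 * ((l : ℝ) - 1) + m) ≤ (l : ℝ) := by linarith
    have hfin : 0.99 * ((m : ℝ) * ε / 2) * (2 * ((l : ℝ) - 1) + m) ≤ ε * (l : ℝ) * m := by
      have hεm : 0 ≤ ε * m := le_of_lt (mul_pos hε hmR)
      have h6 := mul_le_mul_of_nonneg_left h495 hεm
      linarith [h6]
    have hXpos : (0 : ℝ) < 2 * ((l : ℝ) - 1) + m := by
      have : (1 : ℝ) ≤ l := by exact_mod_cast hl0
      linarith
    have h7 : 0.99 * ((m : ℝ) * ε / 2) * (2 * ((l : ℝ) - 1) + m)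
        ≤ (M'.length : ℝ) * (2 * ((l : ℝ) - 1) + m) := by
      calc 0.99 * ((m : ℝ) * ε / 2) * (2 * ((l : ℝ) - 1) + m)
          ≤ ε * (l : ℝ) * m := hfin
        _ ≤ (2 * ((l : ℝ) - 1) + m) * M'.length := key2
        _ = (M'.length : ℝ) * (2 * ((l : ℝ) - 1) + m) := by ring
    exact (mul_le_mul_iff_of_pos_right hXpos).mp h7
end
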